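/- Let m ≥ 2, let L be a word over the alphabet {1,…,m}, and let t be the m-ary tree pattern whose word set is {L} (equivalently, the internal vertices of t form a path starting at the root with successive child-indices given by the letters of L, the last internal vertex on this path being an m-leaf parent). Then an m-ary tree T contains t if and only if L occurs as a contiguous factor of some word in the word set W(T), i.e., some word of W(T) equals p·L·s for (possibly empty) words p and s. -/
import Mathlib


inductive MTree (m : ℕ) : Type
  | leaf : MTree m
  | node : (Fin m → MTree m) → MTree m

namespace MTree

variable {m : ℕ}

/-- `occursAtRoot t T` : the pattern `t` occurs at the root of `T`. -/
def occursAtRoot : MTree m → MTree m → Prop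
  | .leaf, _ => True
  | .node _, .leaf => False
  | .node ps, .node cs => ∀ i, occursAtRoot (ps i) (cs i)

/-- `contains t T` : the pattern `t` occurs at some vertex of `T`. -/
def contains (t : MTree m) : MTree m → Prop
  | .leaf => occursAtRoot t .leaf
  | .node cs => occursAtRoot t (.node cs) ∨ ∃ i, contains t (cs i)

/-- `T.avoids t` : the tree `T` avoids the pattern `t`. -/
def avoids (T t : MTree m) : Prop := ¬ contains t T

/-- the number of leaves of an `m`-ary tree -/
def leaves : MTree m → ℕ
  | .leaf => 1
  | .node cs => ∑ i, leaves (cs i)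

/-- the `σ`-relabeling of an `m`-ary tree -/
def relabel (σ : Equiv.Perm (Fin m)) : MTree m → MTree m
  | .leaf => .leaf
  | .node cs => .node fun i => relabel σ (cs (σ i))

end MTree

namespace MTree

/-- the word set of an `m`-ary tree: the set of words over `{1,…,m}` recording
the child-indices along the path from the root to each `m`-leaf parent
(an internal vertex all of whose children are leaves) -/
def wordSet : MTree m → Set (List (Fin m))
  | .leaf => ∅
  | .node cs =>
      {w | (w = [] ∧ ∀ i, cs i = MTree.leaf) ∨
        ∃ i w', w = i :: w' ∧ w' ∈ wordSet (cs i)}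

/-- the `m`-ary tree pattern whose word set is `{L}`: its internal vertices
form a path from the root with successive child-indices given by the letters
of `L`, the last internal vertex being an `m`-leaf parent -/
def patOfWord : List (Fin m) → MTree m
  | [] => .node fun _ => .leaf
  | i :: w => .node fun j => if j = i then patOfWord w else .leaf

lemma wordSet_or (T : MTree m) : T = leaf ∨ ∃ w, w ∈ wordSet T := by
  induction T with
  | leaf => exact Or.inl rfl
  | node cs ih =>
    right
    by_cases h : ∀ i, cs i = leaf
    · exact ⟨[], Or.inl ⟨rfl, h⟩⟩
    · push_neg at h
      obtain ⟨i, hi⟩ := h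
      rcases ih i with h' | ⟨w, hw⟩
      · exact absurd h' hi
      · exact ⟨i :: w, Or.inr ⟨i, w, rfl, hw⟩⟩

lemma occursAtRoot_patOfWord_iff (L : List (Fin m)) (T : MTree m) :
    occursAtRoot (patOfWord L) T ↔ ∃ w ∈ wordSet T, ∃ s, w = L ++ s := by
  induction L generalizing T with
  | nil =>
    cases T with
    | leaf => simp [patOfWord, occursAtRoot, wordSet]
    | node cs =>
      simp only [List.nil_append]
      constructor
      · intro _
        rcases wordSet_or (node cs) with h | ⟨w, hw⟩
        · exact absurd h (by simp)
        · exact ⟨w, hw, w, rfl⟩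
      · intro _ i
        exact trivial
  | cons i w ih =>
    cases T with
    | leaf => simp [patOfWord, occursAtRoot, wordSet]
    | node cs =>
      constructor
      · intro h
        have hi := h i
        simp only [if_pos rfl] at hi
        obtain ⟨w', hw', s, rfl⟩ := (ih (cs i)).mp hi
        exact ⟨i :: (w ++ s), Or.inr ⟨i, w ++ s, rfl, hw'⟩, s, by simp⟩
      · rintro ⟨w0, hw0, s, rfl⟩
        rcases hw0 with ⟨h1, _⟩ | ⟨j, w', heq, hmem⟩
        · simp at h1
        · rw [List.cons_append] at heq
          obtain ⟨rfl, rfl⟩ := List.cons.inj heq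
          intro k
          show occursAtRoot (if k = i then patOfWord w else leaf) (cs k)
          by_cases hk : k = i
          · subst hk
            rw [if_pos rfl]
            exact (ih (cs k)).mpr ⟨w ++ s, hmem, s, rfl⟩
          · rw [if_neg hk]
            exact trivial

end MTree

/-- For `m ≥ 2`, an `m`-ary tree `T` contains the single-word pattern with
word set `{L}` if and only if `L` occurs as a contiguous factor of some word
in the word set of `T`. -/
theorem contains_patOfWord_iff_factor {m : ℕ} (hm : 2 ≤ m)
    (L : List (Fin m)) (T : MTree m) :
    MTree.contains (MTree.patOfWord L) T ↔
      ∃ w ∈ MTree.wordSet T, ∃ p s : List (Fin m), w = p ++ L ++ s := by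
  induction T with
  | leaf =>
    cases L with
    | nil => simp [MTree.contains, MTree.patOfWord, MTree.occursAtRoot, MTree.wordSet]
    | cons i w => simp [MTree.contains, MTree.patOfWord, MTree.occursAtRoot, MTree.wordSet]
  | node cs ih =>
    constructor
    · rintro (h | ⟨i, hi⟩)
      · obtain ⟨w, hw, s, rfl⟩ := (MTree.occursAtRoot_patOfWord_iff L _).mp h
        exact ⟨L ++ s, hw, [], s, by simp⟩
      · obtain ⟨w, hw, p, s, rfl⟩ := (ih i).mp hi
        exact ⟨i :: (p ++ L ++ s), Or.inr ⟨i, _, rfl, hw⟩, i :: p, s, by simp⟩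
    · rintro ⟨w, hw, p, s, rfl⟩
      cases p with
      | nil =>
        exact Or.inl ((MTree.occursAtRoot_patOfWord_iff L _).mpr
          ⟨L ++ s, by simpa using hw, s, by simp⟩)
      | cons j p' =>
        rcases hw with ⟨h1, _⟩ | ⟨k, w', heq, hmem⟩
        · simp at h1
        · rw [List.cons_append, List.cons_append] at heq
          obtain ⟨rfl, rfl⟩ := List.cons.inj heq
          exact Or.inr ⟨j, (ih j).mpr ⟨_, hmem, p', s, rfl⟩⟩
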